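/- Suppose χ/ω ∈ L^{3,∞}(ℝ³). If F ∈ L^{3,2}(ℝ³), then the function (k,k') ↦ F(k−k') · (χ(k)/ω(k)) · (χ(k')/ω(k')) lies in L²(ℝ³ × ℝ³), with L² norm bounded by a constant times ‖χ/ω‖²_{L^{3,∞}} ‖F‖_{L^{3,2}}. -/

import Mathlib

open MeasureTheory ENNReal Filter Complex
open scoped FourierTransform ComplexConjugate

noncomputable section

abbrev Euc (d : ℕ) := EuclideanSpace ℝ (Fin d)

/-- The Lorentz `L^{p,q}` quasi-norm on `ℝ^d`:
`‖f‖_{L^{p,q}} = p^{1/q} ‖ |{|f|>t}|^{1/p} t ‖_{L^q((0,∞), dt/t)}`,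
with the supremum expression for `q = ∞`. -/
def lorentzNorm {d : ℕ} (p : ℝ) (q : ℝ≥0∞) (f : Euc d → ℂ) : ℝ≥0∞ :=
  if q = ⊤ then
    ⨆ t ∈ Set.Ioi (0 : ℝ), (volume {k | t < ‖f k‖}) ^ (1 / p) * ENNReal.ofReal t
  else
    ENNReal.ofReal p ^ (1 / q.toReal) *
      (∫⁻ t in Set.Ioi (0 : ℝ),
        ((volume {k | t < ‖f k‖}) ^ (1 / p) * ENNReal.ofReal t) ^ q.toReal
          / ENNReal.ofReal t) ^ (1 / q.toReal)

end

section AuxLemmas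
open Set





lemma layer0 (a : ℝ≥0∞) :
    ∫⁻ s in Set.Ioi (0:ℝ), {u : ℝ | ENNReal.ofReal u < a}.indicator 1 s = a := by
  have hms : MeasurableSet {u : ℝ | ENNReal.ofReal u < a} :=
    measurableSet_lt ENNReal.measurable_ofReal measurable_const
  rw [lintegral_indicator hms]
  simp only [Pi.one_apply]
  rw [setLIntegral_one, Measure.restrict_apply hms]
  rcases eq_or_ne a ⊤ with rfl | ha
  · have : {u : ℝ | ENNReal.ofReal u < ⊤} ∩ Set.Ioi 0 = Set.Ioi (0:ℝ) := by
      ext u; simp [ofReal_lt_top]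
    rw [this, Real.volume_Ioi]
  · have : {u : ℝ | ENNReal.ofReal u < a} ∩ Set.Ioi 0 = Set.Ioo 0 a.toReal := by
      ext u
      simp only [mem_inter_iff, mem_setOf_eq, mem_Ioi, mem_Ioo]
      constructor
      · rintro ⟨h1, h2⟩
        exact ⟨h2, (ENNReal.ofReal_lt_iff_lt_toReal h2.le ha).mp h1⟩
      · rintro ⟨h1, h2⟩
        exact ⟨(ENNReal.ofReal_lt_iff_lt_toReal h1.le ha).mpr h2, h1⟩
    rw [this, Real.volume_Ioo, sub_zero, ENNReal.ofReal_toReal ha]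



lemma layer2 {c : ℝ} (hc : 0 ≤ c) :
    ∫⁻ t in Set.Ioi (0:ℝ), (Set.Iio c).indicator (fun t => ENNReal.ofReal (2*t)) t
      = ENNReal.ofReal c ^ 2 := by
  rw [lintegral_indicator measurableSet_Iio, Measure.restrict_restrict measurableSet_Iio]
  have hset : Set.Iio c ∩ Set.Ioi 0 = Set.Ioo 0 c := by
    ext u; simp [mem_Ioo, and_comm]
  rw [hset]
  rw [← ofReal_integral_eq_lintegral_ofReal]
  · rw [← MeasureTheory.integral_Ioc_eq_integral_Ioo, ← intervalIntegral.integral_of_le hc]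
    have : ∫ t in (0:ℝ)..c, 2 * t = c ^ 2 := by
      rw [intervalIntegral.integral_const_mul, integral_id]
      ring
    rw [this, ← ENNReal.ofReal_pow hc]
  · exact ((continuous_const.mul continuous_id).integrableOn_Ioc.mono_set Set.Ioo_subset_Ioc_self)
  · filter_upwards [ae_restrict_mem measurableSet_Ioo] with t ht
    have := ht.1
    positivity



lemma lint_rpow_Ioi {s₀ : ℝ} (hs₀ : 0 < s₀) :
    ∫⁻ s in Set.Ioi s₀, ENNReal.ofReal (s ^ (-(3/2) : ℝ))
      = ENNReal.ofReal (2 * s₀ ^ (-(1/2):ℝ)) := by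
  rw [← ofReal_integral_eq_lintegral_ofReal]
  · congr 1
    rw [integral_Ioi_rpow_of_lt (by norm_num) hs₀]
    rw [show (-(3/2) : ℝ) + 1 = -(1/2) by norm_num]
    ring
  · exact integrableOn_Ioi_rpow_of_lt (by norm_num) hs₀
  · filter_upwards [ae_restrict_mem measurableSet_Ioi] with t ht
    exact Real.rpow_nonneg (hs₀.trans ht).le _

lemma lint_rpow_Ioc {s₀ : ℝ} (hs₀ : 0 < s₀) :
    ∫⁻ s in Set.Ioc 0 s₀, ENNReal.ofReal (s ^ (-(3/4) : ℝ))
      = ENNReal.ofReal (4 * s₀ ^ ((1/4):ℝ)) := by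
  rw [← ofReal_integral_eq_lintegral_ofReal]
  · congr 1
    rw [← intervalIntegral.integral_of_le hs₀.le, integral_rpow (Or.inl (by norm_num))]
    rw [Real.zero_rpow (by norm_num)]
    rw [show (-(3/4) : ℝ) + 1 = 1/4 by norm_num]
    ring
  · exact (intervalIntegral.intervalIntegrable_rpow' (by norm_num)).1
  · filter_upwards [ae_restrict_mem measurableSet_Ioc] with t ht
    exact Real.rpow_nonneg ht.1.le _


-- translation invariance facts
lemma transl (a : Euc 3) {E : Set (Euc 3)} (hE : MeasurableSet E) :
    ∫⁻ x, E.indicator 1 (x - a) = volume E := by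
  simp_rw [sub_eq_add_neg]
  exact ((measurePreserving_add_right (volume : Measure (Euc 3)) (-a)).lintegral_comp
    (measurable_one.indicator hE)).trans (lintegral_indicator_one hE)

lemma refl3 (a : Euc 3) {E : Set (Euc 3)} (hE : MeasurableSet E) :
    ∫⁻ x, E.indicator 1 (a - x) = volume E :=
  ((Measure.measurePreserving_sub_left (volume : Measure (Euc 3)) a).lintegral_comp
    (measurable_one.indicator hE)).trans (lintegral_indicator_one hE)

lemma ind_le_one (S : Set (Euc 3)) (y : Euc 3) : S.indicator (1 : Euc 3 → ℝ≥0∞) y ≤ 1 := by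
  classical
  rw [Set.indicator_apply]
  split <;> simp

lemma ind_ne_top (S : Set (Euc 3)) (y : Euc 3) : S.indicator (1 : Euc 3 → ℝ≥0∞) y ≠ ⊤ :=
  ((ind_le_one S y).trans_lt ENNReal.one_lt_top).ne

lemma keyL {E : Set (Euc 3)} (hE : MeasurableSet E) {h : Euc 3 → ℝ≥0∞} (hmeas : Measurable h)
    {A : ℝ≥0∞}
    (hν : ∀ s : ℝ, 0 < s →
      volume {x | ENNReal.ofReal s < h x} ≤ A ^ (3:ℝ) * ENNReal.ofReal (s ^ (-(3/2) : ℝ))) :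
    ∫⁻ k, h k * ∫⁻ k', (E.indicator 1 (k - k')) * h k' ≤
      24 * A ^ (4:ℝ) * (volume E) ^ ((2:ℝ)/3) := by
  rcases eq_or_ne (volume E) 0 with hm0 | hm0
  · -- E is null
    have hz : ∀ k : Euc 3, ∫⁻ k', E.indicator (1 : Euc 3 → ℝ≥0∞) (k - k') * h k' = 0 := by
      intro k
      have hnull : volume ((fun k' : Euc 3 => k - k') ⁻¹' E) = 0 := by
        rw [(Measure.measurePreserving_sub_left (volume : Measure (Euc 3)) k).measure_preimage
          hE.nullMeasurableSet]
        exact hm0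
      have hae : ∀ᵐ k' ∂(volume : Measure (Euc 3)), k - k' ∉ E := by
        rw [ae_iff]
        simpa [Set.preimage] using hnull
      have : (fun k' : Euc 3 => E.indicator (1 : Euc 3 → ℝ≥0∞) (k - k') * h k')
          =ᵐ[volume] 0 := by
        filter_upwards [hae] with k' hk'
        simp [Set.indicator_of_notMem hk']
      rw [lintegral_congr_ae this]
      simp
    simp only [hz, mul_zero, lintegral_zero]
    exact zero_le
  rcases eq_or_ne A 0 with rfl | hA0
  · -- A = 0 : h vanishes a.e.
    have hν0 : ∀ s : ℝ, 0 < s → volume {x | ENNReal.ofReal s < h x} = 0 := by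
      intro s hs
      have := hν s hs
      simpa [ENNReal.zero_rpow_of_pos (by norm_num : (0:ℝ) < 3)] using this
    have hh0 : h =ᵐ[volume] 0 := by
      rw [Filter.EventuallyEq, ae_iff]
      refine measure_mono_null (fun x hx => ?_)
        (measure_iUnion_null fun n : ℕ => hν0 (1/((n:ℝ)+1)) (by positivity))
      simp only [Set.mem_setOf_eq, Pi.zero_apply] at hx
      obtain ⟨n, hn⟩ := ENNReal.exists_inv_nat_lt hx
      refine Set.mem_iUnion.mpr ⟨n, ?_⟩
      refine lt_of_le_of_lt ?_ hn
      rw [one_div, ENNReal.ofReal_inv_of_pos (by positivity)]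
      refine ENNReal.inv_le_inv.mpr ?_
      have : ENNReal.ofReal ((n:ℝ)+1) = (n : ℝ≥0∞) + 1 := by
        rw [ENNReal.ofReal_add (by positivity) zero_le_one]
        simp
      rw [this]
      exact le_self_add
    have : (fun k => h k * ∫⁻ k', E.indicator (1 : Euc 3 → ℝ≥0∞) (k - k') * h k')
        =ᵐ[volume] 0 := by
      filter_upwards [hh0] with k hk
      simp [hk]
    rw [lintegral_congr_ae this]
    simp
  rcases eq_or_ne A ⊤ with rfl | hAtop
  · have : (24 : ℝ≥0∞) * (⊤ : ℝ≥0∞) ^ (4:ℝ) * (volume E) ^ ((2:ℝ)/3) = ⊤ := by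
      rw [ENNReal.top_rpow_of_pos (by norm_num), ENNReal.mul_top (by norm_num),
        ENNReal.top_mul]
      simp only [ne_eq, ENNReal.rpow_eq_zero_iff, not_or, not_and]
      constructor
      · intro h'; exact absurd h' hm0
      · intro _; norm_num
    rw [this]
    exact le_top
  rcases eq_or_ne (volume E) ⊤ with hmtop | hmtop
  · have : (24 : ℝ≥0∞) * A ^ (4:ℝ) * (volume E) ^ ((2:ℝ)/3) = ⊤ := by
      rw [hmtop, ENNReal.top_rpow_of_pos (by norm_num), ENNReal.mul_top]
      simp only [ne_eq, mul_eq_zero, not_or]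
      constructor
      · norm_num
      · simp only [ENNReal.rpow_eq_zero_iff, not_or, not_and]
        constructor
        · intro h'; exact absurd h' hA0
        · intro _; norm_num
    rw [this]
    exact le_top
  -- Main case
  set m := volume E with hm_def
  set a := A.toReal with ha_def
  set r := m.toReal with hr_def
  have ha : 0 < a := ENNReal.toReal_pos hA0 hAtop
  have hr : 0 < r := ENNReal.toReal_pos hm0 hmtop
  have hAeq : A = ENNReal.ofReal a := (ENNReal.ofReal_toReal hAtop).symm
  have hmeq : m = ENNReal.ofReal r := (ENNReal.ofReal_toReal hmtop).symm
  set y := r ^ ((1:ℝ)/3) with hy_def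
  have hy : 0 < y := Real.rpow_pos_of_pos hr _
  set s₀ := (a / y) ^ 2 with hs₀_def
  have hs₀ : 0 < s₀ := by positivity
  -- level sets of h
  set ν : ℝ → ℝ≥0∞ := fun s => volume {x | ENNReal.ofReal s < h x} with hν_def
  set ψ : ℝ → Euc 3 → ℝ≥0∞ := fun s k => if ENNReal.ofReal s < h k then 1 else 0 with hψ_def
  have hψm : ∀ s, Measurable (ψ s) := fun s =>
    Measurable.ite (measurableSet_lt measurable_const hmeas) measurable_const measurable_const
  have hψm2 : Measurable (fun p : Euc 3 × ℝ => ψ p.2 p.1) :=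
    Measurable.ite (measurableSet_lt (ENNReal.measurable_ofReal.comp measurable_snd)
      (hmeas.comp measurable_fst)) measurable_const measurable_const
  have hψk : ∀ k, Measurable (fun s => ψ s k) := fun k =>
    Measurable.ite (measurableSet_lt ENNReal.measurable_ofReal measurable_const)
      measurable_const measurable_const
  have hψ_le1 : ∀ s k, ψ s k ≤ 1 := by
    intro s k
    simp only [hψ_def]
    split <;> simp
  have hψ_ne_top : ∀ s k, ψ s k ≠ ⊤ := fun s k => ((hψ_le1 s k).trans_lt ENNReal.one_lt_top).ne
  have hψint : ∀ s, ∫⁻ k, ψ s k = ν s := by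
    intro s
    rw [show (fun k => ψ s k) = ({x | ENNReal.ofReal s < h x}).indicator 1 from
      funext fun k => by simp [hψ_def, Set.indicator_apply]]
    exact lintegral_indicator_one (measurableSet_lt measurable_const hmeas)
  have hlayer : ∀ k, ∫⁻ s in Set.Ioi (0:ℝ), ψ s k = h k := by
    intro k
    rw [← layer0 (h k)]
    apply lintegral_congr
    intro s
    simp [hψ_def, Set.indicator_apply]
  set Φ : Euc 3 → Euc 3 → ℝ≥0∞ := fun k k' => E.indicator 1 (k - k') with hΦ_def
  have hΦm2 : Measurable (fun p : Euc 3 × Euc 3 => Φ p.1 p.2) :=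
    (measurable_one.indicator hE).comp (measurable_fst.sub measurable_snd)
  set Jf : Euc 3 → ℝ → ℝ≥0∞ := fun k s' => ∫⁻ k', Φ k k' * ψ s' k' with hJf_def
  have hJfm : Measurable (fun p : Euc 3 × ℝ => Jf p.1 p.2) :=
    Measurable.lintegral_prod_right'
      (f := fun q : (Euc 3 × ℝ) × Euc 3 => Φ q.1.1 q.2 * ψ q.1.2 q.2)
      (((measurable_one.indicator hE).comp
        ((measurable_fst.comp measurable_fst).sub measurable_snd)).mul
      (Measurable.ite (measurableSet_lt
        (ENNReal.measurable_ofReal.comp (measurable_snd.comp measurable_fst))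
        (hmeas.comp measurable_snd)) measurable_const measurable_const))
  set inner : Euc 3 → ℝ≥0∞ := fun k => ∫⁻ k', Φ k k' * h k' with hinner_def
  have hinner_m : Measurable inner :=
    Measurable.lintegral_prod_right'
      (f := fun p : Euc 3 × Euc 3 => Φ p.1 p.2 * h p.2)
      (hΦm2.mul (hmeas.comp measurable_snd))
  have eq1 : ∀ k, inner k = ∫⁻ s' in Set.Ioi (0:ℝ), Jf k s' := by
    intro k
    have e1 : inner k = ∫⁻ k', ∫⁻ s' in Set.Ioi (0:ℝ), Φ k k' * ψ s' k' := by
      apply lintegral_congr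
      intro k'
      rw [lintegral_const_mul' (Φ k k') _ (ind_ne_top E _), hlayer k']
    rw [e1]
    exact lintegral_lintegral_swap
      ((((measurable_one.indicator hE).comp (measurable_const.sub measurable_fst)).mul
        hψm2).aemeasurable)
  set I : ℝ → ℝ → ℝ≥0∞ := fun s s' => ∫⁻ k, ψ s k * Jf k s' with hI_def
  have eqK : (∫⁻ k, h k * inner k)
      = ∫⁻ s in Set.Ioi (0:ℝ), ∫⁻ s' in Set.Ioi (0:ℝ), I s s' := by
    have e3 : (∫⁻ k, h k * inner k) = ∫⁻ k, ∫⁻ s in Set.Ioi (0:ℝ), ψ s k * inner k := by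
      apply lintegral_congr
      intro k
      rw [lintegral_mul_const _ (hψk k), hlayer k]
    have e4 : (∫⁻ k, ∫⁻ s in Set.Ioi (0:ℝ), ψ s k * inner k)
        = ∫⁻ s in Set.Ioi (0:ℝ), ∫⁻ k, ψ s k * inner k :=
      lintegral_lintegral_swap ((hψm2.mul (hinner_m.comp measurable_fst)).aemeasurable)
    rw [e3, e4]
    apply lintegral_congr
    intro s
    have e5 : ∀ k, ψ s k * inner k = ∫⁻ s' in Set.Ioi (0:ℝ), ψ s k * Jf k s' := by
      intro k
      rw [eq1 k, lintegral_const_mul' (ψ s k) _ (hψ_ne_top s k)]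
    rw [lintegral_congr e5]
    exact lintegral_lintegral_swap
      ((((hψm s).comp measurable_fst).mul hJfm).aemeasurable)
  -- three bounds on I
  have hJf_le_ν : ∀ k s', Jf k s' ≤ ν s' := by
    intro k s'
    calc Jf k s' ≤ ∫⁻ k', ψ s' k' := lintegral_mono fun k' => by
          calc Φ k k' * ψ s' k' ≤ 1 * ψ s' k' := mul_le_mul_left (ind_le_one E _) _
            _ = ψ s' k' := one_mul _
      _ = ν s' := hψint s'
  have hJf_le_m : ∀ k s', Jf k s' ≤ m := by
    intro k s'
    calc Jf k s' ≤ ∫⁻ k', Φ k k' := lintegral_mono fun k' => by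
          calc Φ k k' * ψ s' k' ≤ Φ k k' * 1 := mul_le_mul_right (hψ_le1 s' k') _
            _ = Φ k k' := mul_one _
      _ = m := refl3 k hE
  have hI1 : ∀ s s', I s s' ≤ ν s * ν s' := by
    intro s s'
    calc I s s' ≤ ∫⁻ k, ψ s k * ν s' :=
          lintegral_mono fun k => mul_le_mul_right (hJf_le_ν k s') _
      _ = (∫⁻ k, ψ s k) * ν s' := lintegral_mul_const _ (hψm s)
      _ = ν s * ν s' := by rw [hψint s]
  have hI3 : ∀ s s', I s s' ≤ ν s * m := by
    intro s s'
    calc I s s' ≤ ∫⁻ k, ψ s k * m :=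
          lintegral_mono fun k => mul_le_mul_right (hJf_le_m k s') _
      _ = (∫⁻ k, ψ s k) * m := lintegral_mul_const _ (hψm s)
      _ = ν s * m := by rw [hψint s]
  have hI2 : ∀ s s', I s s' ≤ m * ν s' := by
    intro s s'
    have step : (∫⁻ k, Jf k s') = m * ν s' := by
      have sw : (∫⁻ k, Jf k s') = ∫⁻ k', ∫⁻ k, Φ k k' * ψ s' k' :=
        lintegral_lintegral_swap (hΦm2.mul ((hψm s').comp measurable_snd)).aemeasurable
      rw [sw]
      have : ∀ k', ∫⁻ k, Φ k k' * ψ s' k' = m * ψ s' k' := by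
        intro k'
        rw [lintegral_mul_const' _ _ (hψ_ne_top s' k'), transl k' hE, mul_comm]
      rw [lintegral_congr this, lintegral_const_mul _ (hψm s'), hψint s']
    calc I s s' ≤ ∫⁻ k, 1 * Jf k s' :=
          lintegral_mono fun k => mul_le_mul_left (hψ_le1 s k) _
      _ = ∫⁻ k, Jf k s' := by simp
      _ = m * ν s' := step

  -- region functions
  set core : ℝ → ℝ≥0∞ := fun s => A ^ ((3:ℝ)/2) * ENNReal.ofReal (s ^ (-(3/4):ℝ)) with hcore_def
  set u₁ : ℝ → ℝ≥0∞ :=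
    (Set.Ioi s₀).indicator (fun s => A ^ (3:ℝ) * ENNReal.ofReal (s ^ (-(3/2):ℝ))) with hu₁_def
  set u₂ : ℝ → ℝ≥0∞ := (Set.Ioc (0:ℝ) s₀).indicator (fun _ => 1) with hu₂_def
  set u₃ : ℝ → ℝ≥0∞ := (Set.Ioc (0:ℝ) s₀).indicator core with hu₃_def
  have hu₁m : Measurable u₁ := by
    apply Measurable.indicator ?_ measurableSet_Ioi
    fun_prop
  have hu₂m : Measurable u₂ := measurable_const.indicator measurableSet_Ioc
  have hu₃m : Measurable u₃ := by
    apply Measurable.indicator ?_ measurableSet_Ioc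
    fun_prop
  have hcore_sq : ∀ s : ℝ, 0 < s →
      core s * core s = A ^ (3:ℝ) * ENNReal.ofReal (s ^ (-(3/2):ℝ)) := by
    intro s hs
    simp only [hcore_def]
    rw [mul_mul_mul_comm, ← ENNReal.rpow_add _ _ hA0 hAtop,
      ← ENNReal.ofReal_mul (Real.rpow_nonneg hs.le _), ← Real.rpow_add hs]
    norm_num
  have hcore_anti : ∀ s t : ℝ, 0 < s → s ≤ t → core t ≤ core s := by
    intro s t hs hst
    simp only [hcore_def]
    exact mul_le_mul_right (ENNReal.ofReal_le_ofReal
      (Real.rpow_le_rpow_of_nonpos hs hst (by norm_num))) _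
  have hν_le_core : ∀ s : ℝ, 0 < s → ν s ≤ core s * core s := fun s hs =>
    (hν s hs).trans_eq (hcore_sq s hs).symm
  -- pointwise bound on I
  have hpt : ∀ s ∈ Set.Ioi (0:ℝ), ∀ s' ∈ Set.Ioi (0:ℝ),
      I s s' ≤ u₁ s * u₁ s' + m * u₂ s * u₁ s' + m * u₁ s * u₂ s' + m * u₃ s * u₃ s' := by
    intro s hs s' hs'
    rw [Set.mem_Ioi] at hs hs'
    have hβ : ∀ t : ℝ, s₀ < t → ν t ≤ u₁ t := by
      intro t ht
      rw [hu₁_def, Set.indicator_of_mem (Set.mem_Ioi.mpr ht)]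
      exact hν t (hs₀.trans ht)
    rcases le_or_gt s s₀ with hc1 | hc1 <;> rcases le_or_gt s' s₀ with hc2 | hc2
    · -- both small : term 4
      have hu₃s : u₃ s = core s := Set.indicator_of_mem (Set.mem_Ioc.mpr ⟨hs, hc1⟩) _
      have hu₃s' : u₃ s' = core s' := Set.indicator_of_mem (Set.mem_Ioc.mpr ⟨hs', hc2⟩) _
      have key : I s s' ≤ m * (core s * core s') := by
        rcases le_total s s' with hss | hss
        · calc I s s' ≤ m * ν s' := hI2 s s'
            _ ≤ m * (core s' * core s') := mul_le_mul_right (hν_le_core s' hs') _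
            _ ≤ m * (core s * core s') :=
                mul_le_mul_right (mul_le_mul_left (hcore_anti s s' hs hss) _) _
        · calc I s s' ≤ ν s * m := hI3 s s'
            _ = m * ν s := mul_comm _ _
            _ ≤ m * (core s * core s) := mul_le_mul_right (hν_le_core s hs) _
            _ ≤ m * (core s * core s') :=
                mul_le_mul_right (mul_le_mul_right (hcore_anti s' s hs' hss) _) _
      calc I s s' ≤ m * u₃ s * u₃ s' := by rw [hu₃s, hu₃s', mul_assoc]; exact key
        _ ≤ _ := le_add_self
    · -- s small, s' large : term 2
      have hu₂s : u₂ s = 1 := Set.indicator_of_mem (Set.mem_Ioc.mpr ⟨hs, hc1⟩) _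
      calc I s s' ≤ m * u₂ s * u₁ s' := by
            rw [hu₂s, mul_one]
            exact (hI2 s s').trans (mul_le_mul_right (hβ s' hc2) _)
        _ ≤ u₁ s * u₁ s' + m * u₂ s * u₁ s' := le_add_self
        _ ≤ u₁ s * u₁ s' + m * u₂ s * u₁ s' + m * u₁ s * u₂ s' := le_self_add
        _ ≤ _ := le_self_add
    · -- s large, s' small : term 3
      have hu₂s' : u₂ s' = 1 := Set.indicator_of_mem (Set.mem_Ioc.mpr ⟨hs', hc2⟩) _
      calc I s s' ≤ m * u₁ s * u₂ s' := by
            rw [hu₂s', mul_one]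
            exact (hI3 s s').trans ((mul_le_mul_left (hβ s hc1) m).trans_eq (mul_comm _ _))
        _ ≤ u₁ s * u₁ s' + m * u₂ s * u₁ s' + m * u₁ s * u₂ s' := le_add_self
        _ ≤ _ := le_self_add
    · -- both large : term 1
      calc I s s' ≤ ν s * ν s' := hI1 s s'
        _ ≤ u₁ s * u₁ s' := mul_le_mul' (hβ s hc1) (hβ s' hc2)
        _ ≤ u₁ s * u₁ s' + m * u₂ s * u₁ s' := le_self_add
        _ ≤ u₁ s * u₁ s' + m * u₂ s * u₁ s' + m * u₁ s * u₂ s' := le_self_add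
        _ ≤ _ := le_self_add
  -- values of the integrals
  have hint_u₁ : ∫⁻ s in Set.Ioi (0:ℝ), u₁ s
      = A ^ (3:ℝ) * ENNReal.ofReal (2 * s₀ ^ (-(1/2):ℝ)) := by
    rw [hu₁_def, lintegral_indicator measurableSet_Ioi,
      Measure.restrict_restrict measurableSet_Ioi,
      Set.inter_eq_self_of_subset_left (Set.Ioi_subset_Ioi hs₀.le),
      lintegral_const_mul _
        (by fun_prop : Measurable fun s : ℝ => ENNReal.ofReal (s ^ (-(3/2):ℝ))),
      lint_rpow_Ioi hs₀]
  have hint_u₂ : ∫⁻ s in Set.Ioi (0:ℝ), u₂ s = ENNReal.ofReal s₀ := by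
    rw [hu₂_def, lintegral_indicator measurableSet_Ioc,
      Measure.restrict_restrict measurableSet_Ioc,
      Set.inter_eq_self_of_subset_left (fun x hx => hx.1),
      setLIntegral_one, Real.volume_Ioc, sub_zero]
  have hint_u₃ : ∫⁻ s in Set.Ioi (0:ℝ), u₃ s
      = A ^ ((3:ℝ)/2) * ENNReal.ofReal (4 * s₀ ^ ((1:ℝ)/4)) := by
    rw [hu₃_def, hcore_def, lintegral_indicator measurableSet_Ioc,
      Measure.restrict_restrict measurableSet_Ioc,
      Set.inter_eq_self_of_subset_left (fun x hx => hx.1),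
      lintegral_const_mul _
        (by fun_prop : Measurable fun s : ℝ => ENNReal.ofReal (s ^ (-(3/4):ℝ))),
      lint_rpow_Ioc hs₀]
  set V₁ := A ^ (3:ℝ) * ENNReal.ofReal (2 * s₀ ^ (-(1/2):ℝ)) with hV₁
  set V₂ := ENNReal.ofReal s₀ with hV₂
  set V₃ := A ^ ((3:ℝ)/2) * ENNReal.ofReal (4 * s₀ ^ ((1:ℝ)/4)) with hV₃
  have hdouble : (∫⁻ s in Set.Ioi (0:ℝ), ∫⁻ s' in Set.Ioi (0:ℝ),
      (u₁ s * u₁ s' + m * u₂ s * u₁ s' + m * u₁ s * u₂ s' + m * u₃ s * u₃ s'))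
      = V₁ * V₁ + m * V₂ * V₁ + m * V₁ * V₂ + m * V₃ * V₃ := by
    have inner_eq : ∀ s : ℝ, (∫⁻ s' in Set.Ioi (0:ℝ),
        (u₁ s * u₁ s' + m * u₂ s * u₁ s' + m * u₁ s * u₂ s' + m * u₃ s * u₃ s'))
        = u₁ s * V₁ + m * u₂ s * V₁ + m * u₁ s * V₂ + m * u₃ s * V₃ := by
      intro s
      rw [lintegral_add_right _ (hu₃m.const_mul _), lintegral_add_right _ (hu₂m.const_mul _),
        lintegral_add_right _ (hu₁m.const_mul _),
        lintegral_const_mul _ hu₁m, lintegral_const_mul _ hu₁m,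
        lintegral_const_mul _ hu₂m, lintegral_const_mul _ hu₃m,
        hint_u₁, hint_u₂, hint_u₃]
    rw [lintegral_congr inner_eq,
      lintegral_add_right _ ((hu₃m.const_mul m).mul_const V₃),
      lintegral_add_right _ ((hu₁m.const_mul m).mul_const V₂),
      lintegral_add_right _ ((hu₂m.const_mul m).mul_const V₁),
      lintegral_mul_const _ hu₁m,
      lintegral_mul_const _ (hu₂m.const_mul m),
      lintegral_mul_const _ (hu₁m.const_mul m),
      lintegral_mul_const _ (hu₃m.const_mul m),
      lintegral_const_mul _ hu₂m, lintegral_const_mul _ hu₁m, lintegral_const_mul _ hu₃m,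
      hint_u₁, hint_u₂, hint_u₃]
  -- final numeric computation
  have final : V₁ * V₁ + m * V₂ * V₁ + m * V₁ * V₂ + m * V₃ * V₃
      ≤ 24 * A ^ (4:ℝ) * m ^ ((2:ℝ)/3) := by
    have hA3 : A ^ (3:ℝ) = ENNReal.ofReal (a ^ (3:ℝ)) := by
      rw [hAeq, ENNReal.ofReal_rpow_of_pos ha]
    have hA32 : A ^ ((3:ℝ)/2) = ENNReal.ofReal (a ^ ((3:ℝ)/2)) := by
      rw [hAeq, ENNReal.ofReal_rpow_of_pos ha]
    have hA4 : A ^ (4:ℝ) = ENNReal.ofReal (a ^ (4:ℝ)) := by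
      rw [hAeq, ENNReal.ofReal_rpow_of_pos ha]
    have hm23 : m ^ ((2:ℝ)/3) = ENNReal.ofReal (r ^ ((2:ℝ)/3)) := by
      rw [hmeq, ENNReal.ofReal_rpow_of_pos hr]
    set X₁ : ℝ := a ^ (3:ℝ) * (2 * s₀ ^ (-(1/2):ℝ)) with hX₁
    set X₃ : ℝ := a ^ ((3:ℝ)/2) * (4 * s₀ ^ ((1:ℝ)/4)) with hX₃
    have hX₁0 : 0 ≤ X₁ := by positivity
    have hX₃0 : 0 ≤ X₃ := by positivity
    have hV₁R : V₁ = ENNReal.ofReal X₁ := by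
      rw [hV₁, hA3, ← ENNReal.ofReal_mul (by positivity)]
    have hV₃R : V₃ = ENNReal.ofReal X₃ := by
      rw [hV₃, hA32, ← ENNReal.ofReal_mul (by positivity)]
    have e1 : V₁ * V₁ = ENNReal.ofReal (X₁ * X₁) := by
      rw [hV₁R, ← ENNReal.ofReal_mul hX₁0]
    have e2 : m * V₂ * V₁ = ENNReal.ofReal (r * s₀ * X₁) := by
      rw [hV₁R, hV₂, hmeq, ← ENNReal.ofReal_mul hr.le, ← ENNReal.ofReal_mul (by positivity)]
    have e3 : m * V₁ * V₂ = ENNReal.ofReal (r * X₁ * s₀) := by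
      rw [hV₁R, hV₂, hmeq, ← ENNReal.ofReal_mul hr.le, ← ENNReal.ofReal_mul (by positivity)]
    have e4 : m * V₃ * V₃ = ENNReal.ofReal (r * X₃ * X₃) := by
      rw [hV₃R, hmeq, ← ENNReal.ofReal_mul hr.le, ← ENNReal.ofReal_mul (by positivity)]
    have eR : 24 * A ^ (4:ℝ) * m ^ ((2:ℝ)/3)
        = ENNReal.ofReal (24 * a ^ (4:ℝ) * r ^ ((2:ℝ)/3)) := by
      rw [hA4, hm23, show ((24:ℝ≥0∞)) = ENNReal.ofReal 24 by simp,
        ← ENNReal.ofReal_mul (by norm_num), ← ENNReal.ofReal_mul (by positivity)]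
    rw [e1, e2, e3, e4, eR, ← ENNReal.ofReal_add (by positivity) (by positivity),
      ← ENNReal.ofReal_add (by positivity) (by positivity),
      ← ENNReal.ofReal_add (by positivity) (by positivity)]
    apply ENNReal.ofReal_le_ofReal
    -- now a real computation
    have hay : (0:ℝ) < a / y := by positivity
    have hf1 : s₀ ^ (-(1/2):ℝ) = y / a := by
      rw [hs₀_def, ← Real.rpow_natCast (a/y) 2, ← Real.rpow_mul hay.le,
        show ((2:ℕ):ℝ) * (-(1/2)) = (-1:ℝ) by norm_num, Real.rpow_neg_one, inv_div]
    have hf2 : s₀ ^ ((1:ℝ)/4) * s₀ ^ ((1:ℝ)/4) = a / y := by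
      rw [← Real.rpow_add hs₀, show (1:ℝ)/4 + 1/4 = 1/2 by norm_num, hs₀_def,
        ← Real.rpow_natCast (a/y) 2, ← Real.rpow_mul hay.le,
        show ((2:ℕ):ℝ) * (1/2) = (1:ℝ) by norm_num, Real.rpow_one]
    have hf3 : a ^ ((3:ℝ)/2) * a ^ ((3:ℝ)/2) = a ^ (3:ℕ) := by
      rw [← Real.rpow_add ha, show (3:ℝ)/2 + 3/2 = ((3:ℕ):ℝ) by norm_num,
        Real.rpow_natCast]
    have hf4 : a ^ (3:ℝ) = a ^ (3:ℕ) := by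
      rw [show (3:ℝ) = ((3:ℕ):ℝ) by norm_num, Real.rpow_natCast]
    have hf5 : a ^ (4:ℝ) = a ^ (4:ℕ) := by
      rw [show (4:ℝ) = ((4:ℕ):ℝ) by norm_num, Real.rpow_natCast]
    have hf6 : r ^ ((2:ℝ)/3) = y ^ (2:ℕ) := by
      rw [hy_def, ← Real.rpow_natCast (r ^ ((1:ℝ)/3)) 2, ← Real.rpow_mul hr.le]
      norm_num
    have hf7 : y ^ (3:ℕ) = r := by
      rw [hy_def, ← Real.rpow_natCast (r ^ ((1:ℝ)/3)) 3, ← Real.rpow_mul hr.le]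
      norm_num
    have ha' : a ≠ 0 := ha.ne'
    have hy' : y ≠ 0 := hy.ne'
    have t1 : X₁ * X₁ = 4 * (a ^ (4:ℕ) * y ^ (2:ℕ)) := by
      rw [hX₁, hf1, hf4]
      field_simp
      ring
    have t2 : r * s₀ * X₁ = 2 * (a ^ (4:ℕ) * y ^ (2:ℕ)) := by
      rw [hX₁, hf1, hf4, hs₀_def, ← hf7]
      field_simp
    have t3 : r * X₁ * s₀ = 2 * (a ^ (4:ℕ) * y ^ (2:ℕ)) := by
      rw [hX₁, hf1, hf4, hs₀_def, ← hf7]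
      field_simp
    have t4 : r * X₃ * X₃ = 16 * (a ^ (4:ℕ) * y ^ (2:ℕ)) := by
      have expand : r * X₃ * X₃
          = (a ^ ((3:ℝ)/2) * a ^ ((3:ℝ)/2)) * ((s₀ ^ ((1:ℝ)/4) * s₀ ^ ((1:ℝ)/4)) * (16 * r)) := by
        rw [hX₃]; ring
      rw [expand, hf3, hf2, ← hf7]
      field_simp
    rw [t1, t2, t3, t4, hf5, hf6]
    apply le_of_eq
    ring
  -- final assembly
  have final_chain : (∫⁻ k, h k * inner k) ≤ 24 * A ^ (4:ℝ) * m ^ ((2:ℝ)/3) := by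
    rw [eqK]
    calc (∫⁻ s in Set.Ioi (0:ℝ), ∫⁻ s' in Set.Ioi (0:ℝ), I s s')
        ≤ ∫⁻ s in Set.Ioi (0:ℝ), ∫⁻ s' in Set.Ioi (0:ℝ),
            (u₁ s * u₁ s' + m * u₂ s * u₁ s' + m * u₁ s * u₂ s' + m * u₃ s * u₃ s') := by
          refine lintegral_mono_ae ?_
          filter_upwards [ae_restrict_mem measurableSet_Ioi] with s hs
          refine lintegral_mono_ae ?_
          filter_upwards [ae_restrict_mem measurableSet_Ioi] with s' hs'
          exact hpt s hs s' hs'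
      _ = V₁ * V₁ + m * V₂ * V₁ + m * V₁ * V₂ + m * V₃ * V₃ := hdouble
      _ ≤ 24 * A ^ (4:ℝ) * m ^ ((2:ℝ)/3) := final
  exact final_chain
lemma sq_half (x : ℝ≥0∞) : (x ^ ((1:ℝ)/2)) ^ (2:ℕ) = x := by
  rw [← ENNReal.rpow_natCast (x ^ ((1:ℝ)/2)) 2, ← ENNReal.rpow_mul]
  norm_num

lemma pow_half_sq (x : ℝ≥0∞) : (x ^ (2:ℕ)) ^ ((1:ℝ)/2) = x := by
  rw [← ENNReal.rpow_natCast x 2, ← ENNReal.rpow_mul]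
  norm_num

lemma cube_third (x : ℝ≥0∞) : (x ^ ((1:ℝ)/3)) ^ (3:ℝ) = x := by
  rw [← ENNReal.rpow_mul]
  norm_num
lemma cube_third' (x : ℝ≥0∞) : (x ^ ((1:ℝ)/3)) ^ (3:ℝ) = x := by
  rw [← ENNReal.rpow_mul]; norm_num

lemma weak_bound {g : Euc 3 → ℝ} {A : ℝ≥0∞}
    (hA : ∀ t : ℝ, 0 < t → (volume {k | t < ‖g k‖}) ^ ((1:ℝ)/3) * ENNReal.ofReal t ≤ A) :
    ∀ s : ℝ, 0 < s →
      volume {x | ENNReal.ofReal s < (ENNReal.ofReal ‖g x‖) ^ (2:ℕ)} ≤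
        A ^ (3:ℝ) * ENNReal.ofReal (s ^ (-(3/2) : ℝ)) := by
  intro s hs
  have hsq : 0 < Real.sqrt s := Real.sqrt_pos.mpr hs
  have hset : {x | ENNReal.ofReal s < (ENNReal.ofReal ‖g x‖) ^ (2:ℕ)}
      = {x | Real.sqrt s < ‖g x‖} := by
    ext x
    simp only [Set.mem_setOf_eq]
    rw [← ENNReal.ofReal_pow (norm_nonneg _),
      ENNReal.ofReal_lt_ofReal_iff_of_nonneg hs.le]
    constructor
    · intro h1
      have hx : 0 < ‖g x‖ := by nlinarith [norm_nonneg (g x)]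
      exact (Real.sqrt_lt' hx).mpr h1
    · intro h1
      have hx : 0 < ‖g x‖ := lt_of_le_of_lt (Real.sqrt_nonneg s) h1
      exact (Real.sqrt_lt' hx).mp h1
  rw [hset]
  have hdiv : (volume {k | Real.sqrt s < ‖g k‖}) ^ ((1:ℝ)/3)
      ≤ A / ENNReal.ofReal (Real.sqrt s) := by
    rw [ENNReal.le_div_iff_mul_le
      (Or.inl (by simp [hsq, hsq.le, ENNReal.ofReal_eq_zero, not_le, hsq.ne']))
      (Or.inl ENNReal.ofReal_ne_top)]
    exact hA (Real.sqrt s) hsq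
  have h2 := ENNReal.rpow_le_rpow hdiv (by norm_num : (0:ℝ) ≤ 3)
  rw [cube_third'] at h2
  refine h2.trans (le_of_eq ?_)
  rw [ENNReal.div_rpow_of_nonneg _ _ (by norm_num : (0:ℝ) ≤ 3),
    ENNReal.ofReal_rpow_of_pos hsq]
  have hs32 : Real.sqrt s ^ (3:ℝ) = s ^ ((3:ℝ)/2) := by
    rw [Real.sqrt_eq_rpow, ← Real.rpow_mul hs.le]
    norm_num
  rw [hs32, div_eq_mul_inv,
    ← ENNReal.ofReal_inv_of_pos (Real.rpow_pos_of_pos hs _),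
    ← Real.rpow_neg hs.le]

lemma Jsimp (μt : ℝ → ℝ≥0∞) :
    (∫⁻ t in Set.Ioi (0 : ℝ), ((μt t) ^ ((1:ℝ)/3) * ENNReal.ofReal t) ^ (2:ℝ)
          / ENNReal.ofReal t)
      = ∫⁻ t in Set.Ioi (0:ℝ), μt t ^ ((2:ℝ)/3) * ENNReal.ofReal t := by
  refine setLIntegral_congr_fun measurableSet_Ioi ?_
  intro t ht
  rw [Set.mem_Ioi] at ht
  dsimp only
  rw [ENNReal.mul_rpow_of_nonneg _ _ (by norm_num : (0:ℝ) ≤ 2), ← ENNReal.rpow_mul (μt t),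
    show (1:ℝ)/3 * 2 = (2:ℝ)/3 by norm_num,
    show (ENNReal.ofReal t) ^ (2:ℝ) = ENNReal.ofReal t * ENNReal.ofReal t by
      rw [show (2:ℝ) = ((2:ℕ):ℝ) by norm_num, ENNReal.rpow_natCast, pow_two],
    ← mul_assoc, mul_div_assoc,
    ENNReal.div_self (by simp [ht, ht.ne'] : ENNReal.ofReal t ≠ 0) ENNReal.ofReal_ne_top,
    mul_one]


end AuxLemmas

/-- If `χ/ω ∈ L^{3,∞}(ℝ³)` and `F ∈ L^{3,2}(ℝ³)`, then
`(k,k') ↦ F(k−k') (χ(k)/ω(k)) (χ(k')/ω(k'))` lies in `L²(ℝ³×ℝ³)`, with norm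
`≲ ‖χ/ω‖²_{L^{3,∞}} ‖F‖_{L^{3,2}}`. -/
theorem stmt9 :
    ∃ C > (0 : ℝ), ∀ (ω χ : Euc 3 → ℝ) (F : Euc 3 → ℂ),
      Measurable ω → Measurable χ → Measurable F →
      lorentzNorm 3 ⊤ (fun k => ((χ k / ω k : ℝ) : ℂ)) < ⊤ →
      lorentzNorm 3 2 F < ⊤ →
      MeasureTheory.eLpNorm
          (fun kk : Euc 3 × Euc 3 =>
            F (kk.1 - kk.2) * ((χ kk.1 / ω kk.1 : ℝ) : ℂ) * ((χ kk.2 / ω kk.2 : ℝ) : ℂ))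
          2 volume
        ≤ ENNReal.ofReal C * (lorentzNorm 3 ⊤ (fun k => ((χ k / ω k : ℝ) : ℂ))) ^ 2
            * lorentzNorm 3 2 F := by
  refine ⟨4, by norm_num, ?_⟩
  intro ω χ F hω hχ hF hlorA hlorB
  classical
  set A := lorentzNorm 3 ⊤ (fun k => ((χ k / ω k : ℝ) : ℂ)) with hA_def
  set B := lorentzNorm 3 2 F with hB_def
  have hAne : A ≠ ⊤ := hlorA.ne
  set h : Euc 3 → ℝ≥0∞ := fun k => (ENNReal.ofReal ‖χ k / ω k‖) ^ (2:ℕ) with hh_def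
  have hhm : Measurable h := (ENNReal.measurable_ofReal.comp (hχ.div hω).norm).pow_const 2
  have hh_ne_top : ∀ k, h k ≠ ⊤ := fun k => ENNReal.pow_ne_top ENNReal.ofReal_ne_top
  set JI := ∫⁻ t in Set.Ioi (0:ℝ), (volume {x : Euc 3 | t < ‖F x‖}) ^ ((2:ℝ)/3)
      * ENNReal.ofReal t with hJI_def
  -- weak bound for h from A
  have hAt : ∀ t : ℝ, 0 < t →
      (volume {k : Euc 3 | t < ‖χ k / ω k‖}) ^ ((1:ℝ)/3) * ENNReal.ofReal t ≤ A := by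
    intro t ht
    have hset : {k : Euc 3 | t < ‖χ k / ω k‖} = {k : Euc 3 | t < ‖((χ k / ω k : ℝ):ℂ)‖} := by
      simp [Complex.norm_real]
    rw [hset, hA_def, lorentzNorm, if_pos rfl]
    have := le_iSup₂ (f := fun (u : ℝ) (_ : u ∈ Set.Ioi (0:ℝ)) =>
      (volume {k : Euc 3 | u < ‖((χ k / ω k : ℝ):ℂ)‖}) ^ (1/(3:ℝ)) * ENNReal.ofReal u) t
      (Set.mem_Ioi.mpr ht)
    simpa using this
  have hweak : ∀ s : ℝ, 0 < s →
      volume {x | ENNReal.ofReal s < h x} ≤ A ^ (3:ℝ) * ENNReal.ofReal (s ^ (-(3/2) : ℝ)) :=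
    weak_bound hAt
  -- B squared
  have hB_eq : B = ENNReal.ofReal 3 ^ ((1:ℝ)/2) *
      (∫⁻ t in Set.Ioi (0 : ℝ),
        ((volume {x : Euc 3 | t < ‖F x‖}) ^ ((1:ℝ)/3) * ENNReal.ofReal t) ^ (2:ℝ)
          / ENNReal.ofReal t) ^ ((1:ℝ)/2) := by
    rw [hB_def, lorentzNorm, if_neg (by norm_num)]
    norm_num
  have hBsq : B ^ (2:ℕ) = 3 * JI := by
    rw [hB_eq, mul_pow, sq_half, sq_half, Jsimp (fun t => volume {x : Euc 3 | t < ‖F x‖}),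
      ENNReal.ofReal_ofNat, hJI_def]
  -- unfold the L² norm
  rw [eLpNorm_eq_lintegral_rpow_enorm_toReal (by norm_num) (by norm_num)]
  simp only [ENNReal.toReal_ofNat, enorm_eq_nnnorm]
  -- suffices to bound the square
  suffices hT : (∫⁻ kk : Euc 3 × Euc 3,
      (‖F (kk.1 - kk.2) * ((χ kk.1 / ω kk.1 : ℝ):ℂ) * ((χ kk.2 / ω kk.2 : ℝ):ℂ)‖₊ : ℝ≥0∞)
        ^ (2:ℝ)) ≤ (ENNReal.ofReal 4 * A ^ 2 * B) ^ (2:ℕ) by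
    calc (∫⁻ kk : Euc 3 × Euc 3,
        (‖F (kk.1 - kk.2) * ((χ kk.1 / ω kk.1 : ℝ):ℂ) * ((χ kk.2 / ω kk.2 : ℝ):ℂ)‖₊ : ℝ≥0∞)
          ^ (2:ℝ)) ^ (1/(2:ℝ))
        ≤ ((ENNReal.ofReal 4 * A ^ 2 * B) ^ (2:ℕ)) ^ ((1:ℝ)/2) :=
          ENNReal.rpow_le_rpow hT (by norm_num)
      _ = ENNReal.ofReal 4 * A ^ 2 * B := pow_half_sq _
  -- rewrite the RHS square
  have hrhs : (ENNReal.ofReal 4 * A ^ 2 * B) ^ (2:ℕ) = 48 * A ^ (4:ℝ) * JI := by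
    rw [mul_pow, mul_pow, hBsq,
      show (ENNReal.ofReal 4) ^ (2:ℕ) = 16 by
        rw [← ENNReal.ofReal_pow (by norm_num)]; norm_num,
      show (A ^ (2:ℕ)) ^ (2:ℕ) = A ^ (4:ℝ) by
        rw [← pow_mul, ← ENNReal.rpow_natCast A 4]; norm_num]
    ring
  rw [hrhs]
  -- pointwise identity for the integrand
  set FN : Euc 3 → ℝ≥0∞ := fun x => (ENNReal.ofReal ‖F x‖) ^ (2:ℕ) with hFN_def
  have claim4 : ∀ kk : Euc 3 × Euc 3,
      ((‖F (kk.1 - kk.2) * ((χ kk.1 / ω kk.1 : ℝ):ℂ) * ((χ kk.2 / ω kk.2 : ℝ):ℂ)‖₊ : ℝ≥0∞))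
        ^ (2:ℝ) = FN (kk.1 - kk.2) * h kk.1 * h kk.2 := by
    intro kk
    rw [show (2:ℝ) = ((2:ℕ):ℝ) by norm_num, ENNReal.rpow_natCast,
      ← enorm_eq_nnnorm, ← ofReal_norm, norm_mul, norm_mul, Complex.norm_real, Complex.norm_real,
      ENNReal.ofReal_mul (by positivity), ENNReal.ofReal_mul (by positivity),
      mul_pow, mul_pow]
  have hQp : Measurable (fun kk : Euc 3 × Euc 3 => FN (kk.1 - kk.2) * h kk.1 * h kk.2) :=
    (((ENNReal.measurable_ofReal.comp
        (hF.norm.comp (measurable_fst.sub measurable_snd))).pow_const 2).mul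
      (hhm.comp measurable_fst)).mul (hhm.comp measurable_snd)
  have hstep0 : (∫⁻ kk : Euc 3 × Euc 3,
      (‖F (kk.1 - kk.2) * ((χ kk.1 / ω kk.1 : ℝ):ℂ) * ((χ kk.2 / ω kk.2 : ℝ):ℂ)‖₊ : ℝ≥0∞)
        ^ (2:ℝ)) = ∫⁻ k, ∫⁻ k', FN (k - k') * h k * h k' := by
    rw [lintegral_congr claim4, Measure.volume_eq_prod, lintegral_prod _ hQp.aemeasurable]
  rw [hstep0]
  -- layer-cake in t
  set Wf : Euc 3 → Euc 3 → ℝ → ℝ≥0∞ :=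
    fun k k' t => (if t < ‖F (k - k')‖ then ENNReal.ofReal (2*t) else 0) * h k * h k'
    with hWf_def
  have hswap1 : ∀ k : Euc 3, (∫⁻ k', FN (k - k') * h k * h k')
      = ∫⁻ t in Set.Ioi (0:ℝ), ∫⁻ k', Wf k k' t := by
    intro k
    have e1 : ∀ k', FN (k - k') * h k * h k'
        = ∫⁻ t in Set.Ioi (0:ℝ), Wf k k' t := by
      intro k'
      calc FN (k - k') * h k * h k'
          = (∫⁻ t in Set.Ioi (0:ℝ),
              (Set.Iio ‖F (k - k')‖).indicator (fun t => ENNReal.ofReal (2*t)) t)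
            * h k * h k' := by rw [hFN_def]; rw [layer2 (norm_nonneg (F (k - k')))]
        _ = ∫⁻ t in Set.Ioi (0:ℝ),
              ((Set.Iio ‖F (k - k')‖).indicator (fun t => ENNReal.ofReal (2*t)) t)
                * h k * h k' := by
            rw [← lintegral_mul_const' (h k) _ (hh_ne_top k),
              ← lintegral_mul_const' (h k') _ (hh_ne_top k')]
        _ = ∫⁻ t in Set.Ioi (0:ℝ), Wf k k' t := by
            apply lintegral_congr
            intro t
            simp only [hWf_def, Set.indicator_apply, Set.mem_Iio]
    rw [lintegral_congr e1]
    exact lintegral_lintegral_swap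
      ((((Measurable.ite
          (measurableSet_lt measurable_snd ((hF.norm).comp (measurable_const.sub measurable_fst)))
          (ENNReal.measurable_ofReal.comp (measurable_snd.const_mul 2))
          measurable_const).mul_const (h k)).mul (hhm.comp measurable_fst)).aemeasurable)
  have hGm : Measurable (fun p : Euc 3 × ℝ => ∫⁻ k', Wf p.1 k' p.2) :=
    Measurable.lintegral_prod_right'
      (f := fun q : (Euc 3 × ℝ) × Euc 3 => Wf q.1.1 q.2 q.1.2)
      (((Measurable.ite (measurableSet_lt (measurable_snd.comp measurable_fst)
          ((hF.norm).comp ((measurable_fst.comp measurable_fst).sub measurable_snd)))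
          (ENNReal.measurable_ofReal.comp ((measurable_snd.comp measurable_fst).const_mul 2))
          measurable_const).mul
        (hhm.comp (measurable_fst.comp measurable_fst))).mul (hhm.comp measurable_snd))
  have hstep2 : (∫⁻ k, ∫⁻ k', FN (k - k') * h k * h k')
      = ∫⁻ t in Set.Ioi (0:ℝ), ∫⁻ k, ∫⁻ k', Wf k k' t := by
    rw [lintegral_congr hswap1]
    exact lintegral_lintegral_swap hGm.aemeasurable
  rw [hstep2]
  -- per-t reduction and the key lemma
  have hstep3 : ∀ t : ℝ, t ∈ Set.Ioi (0:ℝ) → (∫⁻ k, ∫⁻ k', Wf k k' t)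
      = ENNReal.ofReal (2*t)
        * ∫⁻ k, h k * ∫⁻ k', (({x : Euc 3 | t < ‖F x‖}).indicator 1 (k - k') * h k') := by
    intro t ht
    have e3 : ∀ k k', Wf k k' t
        = ENNReal.ofReal (2*t)
          * (h k * (({x : Euc 3 | t < ‖F x‖}).indicator 1 (k - k') * h k')) := by
      intro k k'
      by_cases hlt : t < ‖F (k - k')‖
      · rw [hWf_def]
        simp only [if_pos hlt,
          Set.indicator_of_mem (show (k - k') ∈ {x : Euc 3 | t < ‖F x‖} from hlt)]
        simp only [Pi.one_apply]
        ring
      · rw [hWf_def]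
        simp only [if_neg hlt,
          Set.indicator_of_notMem (show (k - k') ∉ {x : Euc 3 | t < ‖F x‖} from hlt)]
        simp
    calc (∫⁻ k, ∫⁻ k', Wf k k' t)
        = ∫⁻ k, ENNReal.ofReal (2*t)
            * (h k * ∫⁻ k', (({x : Euc 3 | t < ‖F x‖}).indicator 1 (k - k') * h k')) := by
          apply lintegral_congr
          intro k
          rw [lintegral_congr (e3 k), lintegral_const_mul' _ _ ENNReal.ofReal_ne_top,
            lintegral_const_mul' _ _ (hh_ne_top k)]
      _ = ENNReal.ofReal (2*t)
            * ∫⁻ k, h k * ∫⁻ k', (({x : Euc 3 | t < ‖F x‖}).indicator 1 (k - k') * h k') := by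
          rw [lintegral_const_mul' _ _ ENNReal.ofReal_ne_top]
  rw [setLIntegral_congr_fun measurableSet_Ioi hstep3]
  have hkey : ∀ t : ℝ, t ∈ Set.Ioi (0:ℝ) →
      (∫⁻ k, h k * ∫⁻ k', (({x : Euc 3 | t < ‖F x‖}).indicator 1 (k - k') * h k'))
        ≤ 24 * A ^ (4:ℝ) * (volume {x : Euc 3 | t < ‖F x‖}) ^ ((2:ℝ)/3) :=
    fun t _ => keyL (measurableSet_lt measurable_const hF.norm) hhm hweak
  calc (∫⁻ t in Set.Ioi (0:ℝ), ENNReal.ofReal (2*t)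
        * ∫⁻ k, h k * ∫⁻ k', (({x : Euc 3 | t < ‖F x‖}).indicator 1 (k - k') * h k'))
      ≤ ∫⁻ t in Set.Ioi (0:ℝ), ENNReal.ofReal (2*t)
          * (24 * A ^ (4:ℝ) * (volume {x : Euc 3 | t < ‖F x‖}) ^ ((2:ℝ)/3)) := by
        refine lintegral_mono_ae ?_
        filter_upwards [ae_restrict_mem measurableSet_Ioi] with t ht
        exact mul_le_mul_right (hkey t ht) _
    _ = ∫⁻ t in Set.Ioi (0:ℝ), (48 * A ^ (4:ℝ))
          * ((volume {x : Euc 3 | t < ‖F x‖}) ^ ((2:ℝ)/3) * ENNReal.ofReal t) := by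
        apply lintegral_congr
        intro t
        rw [ENNReal.ofReal_mul (by norm_num : (0:ℝ) ≤ 2), ENNReal.ofReal_ofNat]
        ring
    _ = 48 * A ^ (4:ℝ) * JI := by
        rw [lintegral_const_mul' _ _
          (ENNReal.mul_ne_top (by norm_num) (ENNReal.rpow_ne_top_of_nonneg (by norm_num) hAne)),
          hJI_def, mul_assoc]
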